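/- Suppose ℝ = ℝ' × ℝ'' (the alphabet splits into two mutually independent parts) and there is some prime s ∈ 𝒫(ℝ') with sℝ ⊆ L but no prime t ∈ 𝒫(ℝ'') with tℝ ⊆ L. Define L₁ = {u ∈ 𝒫(ℝ') : uℝ ⊆ L} and L₂ = {u ∈ 𝒫(ℝ') : uℝ ⊆ L^c}. Then L is locally monitorable if and only if the family {L₁ℝ', L₂ℝ'} is locally monitorable with respect to ℝ'. -/
import Mathlib


/-!
Abstract setting for real Mazurkiewicz traces: `T` is the set ℝ of real
traces with the prefix partial order, `P : Set T` is the set 𝒫 of prime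
traces, `cone p` is `pℝ = {t : p ≤ t}`.
-/

namespace MzTrace

variable {T : Type} [PartialOrder T]

/-- `cone p` models `pℝ`, the set of traces having `p` as a prefix. -/
def cone (p : T) : Set T := Set.Ici p

/-- A set of traces is prime-open (w.r.t. the set `P` of prime traces)
if it is a union `⋃ {pℝ : p ∈ U}` for some `U ⊆ P`. -/
def PrimeOpen (P : Set T) (L : Set T) : Prop := ∃ U ⊆ P, L = ⋃ p ∈ U, cone p

/-- A set is prime-closed if its complement is prime-open. -/
def PrimeClosed (P : Set T) (L : Set T) : Prop := PrimeOpen P Lᶜ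

/-- The prime closure of `L`: the intersection of all prime-closed supersets. -/
def primeClosure (P : Set T) (L : Set T) : Set T := ⋂₀ {K | PrimeClosed P K ∧ L ⊆ K}

/-- A set `C` of traces is coherent if it has a common upper bound (a trace
`t` with `C ⊆ pref(t)`). -/
def Coherent (C : Set T) : Prop := BddAbove C

/-- `primePref P L` is `𝒫(L)`, the set of prime prefixes of elements of `L`. -/
def primePref (P : Set T) (L : Set T) : Set T := {p ∈ P | ∃ t ∈ L, p ≤ t}

/-- `L` is locally monitorable: for every prime `s` there is a prime `t`
with `{s,t}` coherent (i.e. `s ≤ tℝ`) and `tℝ ⊆ L` or `tℝ ⊆ Lᶜ`. -/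
def LocallyMonitorable (P : Set T) (L : Set T) : Prop :=
  ∀ s ∈ P, ∃ t ∈ P, Coherent {s, t} ∧ (cone t ⊆ L ∨ cone t ⊆ Lᶜ)

end MzTrace

namespace MzTrace

/-- A family `F` of subsets is locally monitorable (w.r.t. the primes `P`). -/
def FamilyLocallyMonitorable {T : Type} [PartialOrder T] (P : Set T) (F : Set (Set T)) : Prop :=
  ∀ s ∈ P, ∃ t ∈ P, ∃ Li ∈ F, Coherent {s, t} ∧ cone t ⊆ Li

variable {T₁ T₂ : Type} [PartialOrder T₁] [PartialOrder T₂] [OrderBot T₁] [OrderBot T₂]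

/-!
STATEMENT 12 (Theorem thm:discon).  The alphabet splits into two mutually
independent parts, so `ℝ = ℝ' × ℝ''` with the componentwise prefix order
(`⊥` is the empty trace).  The primes of `ℝ` are the primes of `ℝ'` (paired
with the empty trace of `ℝ''`) together with the primes of `ℝ''`.
-/

/-- The primes of the product `ℝ' × ℝ''`, where `P₁ = 𝒫(ℝ')`, `P₂ = 𝒫(ℝ'')`. -/
def prodPrimes (P₁ : Set T₁) (P₂ : Set T₂) : Set (T₁ × T₂) :=
  (fun p => (p, (⊥ : T₂))) '' P₁ ∪ (fun q => ((⊥ : T₁), q)) '' P₂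

/-- suppose some prime `s ∈ 𝒫(ℝ')` satisfies `sℝ ⊆ L` but no
prime `t ∈ 𝒫(ℝ'')` satisfies `tℝ ⊆ L`.  With
`L₁ = {u ∈ 𝒫(ℝ') : uℝ ⊆ L}` and `L₂ = {u ∈ 𝒫(ℝ') : uℝ ⊆ L^c}`,
the set `L` is locally monitorable iff the family `{L₁ℝ', L₂ℝ'}` is locally
monitorable w.r.t. `ℝ'`. -/
theorem locallyMonitorable_disconnected (P₁ : Set T₁) (P₂ : Set T₂) (L : Set (T₁ × T₂))
    (h1 : ∃ s ∈ P₁, cone (s, (⊥ : T₂)) ⊆ L)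
    (h2 : ¬ ∃ t ∈ P₂, cone ((⊥ : T₁), t) ⊆ L) :
    LocallyMonitorable (prodPrimes P₁ P₂) L ↔
      FamilyLocallyMonitorable P₁
        { ⋃ u ∈ {u ∈ P₁ | cone (u, (⊥ : T₂)) ⊆ L}, cone u,
          ⋃ u ∈ {u ∈ P₁ | cone (u, (⊥ : T₂)) ⊆ Lᶜ}, cone u } := by

  obtain ⟨s₀, hs₀P, hs₀L⟩ := h1
  constructor
  · intro hLM p hp
    obtain ⟨t, htP, ⟨b, hb⟩, hc⟩ := hLM (p, ⊥) (Or.inl ⟨p, hp, rfl⟩)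
    rcases htP with ⟨u, huP, rfl⟩ | ⟨q, hqP, rfl⟩
    · refine ⟨u, huP, ?_⟩
      have hbnd : Coherent ({p, u} : Set T₁) := by
        refine ⟨b.1, ?_⟩
        rintro x (rfl | rfl)
        · exact (hb (Set.mem_insert _ _)).1
        · exact (hb (Set.mem_insert_of_mem _ rfl)).1
      rcases hc with hc | hc
      · exact ⟨_, Set.mem_insert _ _, hbnd,
          fun x hx => Set.mem_biUnion (⟨huP, hc⟩ : u ∈ {u ∈ P₁ | cone (u, (⊥ : T₂)) ⊆ L}) hx⟩
      · exact ⟨_, Set.mem_insert_of_mem _ rfl, hbnd,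
          fun x hx => Set.mem_biUnion (⟨huP, hc⟩ : u ∈ {u ∈ P₁ | cone (u, (⊥ : T₂)) ⊆ Lᶜ}) hx⟩
    · exfalso
      rcases hc with hc | hc
      · exact h2 ⟨q, hqP, hc⟩
      · exact hc (Set.mem_Ici.mpr (Prod.mk_le_mk.mpr ⟨bot_le, le_rfl⟩))
          (hs₀L (Set.mem_Ici.mpr (Prod.mk_le_mk.mpr ⟨le_rfl, (bot_le : (⊥ : T₂) ≤ q)⟩)))
  · intro hF s hs
    rcases hs with ⟨p, hp, rfl⟩ | ⟨q, hq, rfl⟩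
    · obtain ⟨t, htP, Li, hLi, ⟨b, hb⟩, hct⟩ := hF p hp
      have ht : t ∈ Li := hct (Set.mem_Ici.mpr le_rfl)
      have hbnd : Coherent ({(p, (⊥ : T₂)), (t, (⊥ : T₂))} : Set (T₁ × T₂)) := by
        refine ⟨(b, ⊥), ?_⟩
        rintro x (rfl | rfl)
        · exact Prod.mk_le_mk.mpr ⟨hb (Set.mem_insert _ _), le_rfl⟩
        · exact Prod.mk_le_mk.mpr ⟨hb (Set.mem_insert_of_mem _ rfl), le_rfl⟩
      refine ⟨(t, ⊥), Or.inl ⟨t, htP, rfl⟩, hbnd, ?_⟩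
      rcases Set.mem_insert_iff.mp hLi with rfl | hLi'
      · obtain ⟨u, hu, htu⟩ := Set.mem_iUnion₂.mp ht
        exact Or.inl (fun x hx => hu.2 (Set.mem_Ici.mpr
          (le_trans (Prod.mk_le_mk.mpr ⟨Set.mem_Ici.mp htu, le_rfl⟩) (Set.mem_Ici.mp hx))))
      · rw [Set.mem_singleton_iff] at hLi'
        subst hLi'
        obtain ⟨u, hu, htu⟩ := Set.mem_iUnion₂.mp ht
        exact Or.inr (fun x hx => hu.2 (Set.mem_Ici.mpr
          (le_trans (Prod.mk_le_mk.mpr ⟨Set.mem_Ici.mp htu, le_rfl⟩) (Set.mem_Ici.mp hx))))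
    · refine ⟨(s₀, ⊥), Or.inl ⟨s₀, hs₀P, rfl⟩, ⟨(s₀, q), ?_⟩, Or.inl hs₀L⟩
      rintro x (rfl | rfl)
      · exact Prod.mk_le_mk.mpr ⟨bot_le, le_rfl⟩
      · exact Prod.mk_le_mk.mpr ⟨le_rfl, bot_le⟩

end MzTrace
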